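/- arXiv:2306.00613 — 2 statements merged into one kernel-verified Lean document; each statement's English description precedes it below -/
import Mathlib

section
/- Let Γ ≤ Sym(Ω), and let Δ₁, Δ₂ be two equivalent orbits of Γ witnessed by a bijection b′ : Δ₁ → Δ₂. Define b ∈ Sym(Ω) by b(x) = b′(x) for x ∈ Δ₁, b(x) = b′⁻¹(x) for x ∈ Δ₂, and b(x) = x otherwise. Then b commutes with every element of Γ, i.e., b is in the centralizer of Γ in Sym(Ω). -/
/-- A set is an orbit of a permutation group `Γ ≤ Sym(Ω)`. -/
def IsOrbit {Ω : Type*} (Γ : Subgroup (Equiv.Perm Ω)) (Δ : Set Ω) : Prop :=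
  ∃ ω : Ω, Δ = MulAction.orbit Γ ω

/-- Given two distinct equivalent orbits `Δ₁, Δ₂` witnessed by `b'`, the permutation `b`
acting as `b'` on `Δ₁`, as `b'⁻¹` on `Δ₂` and as the identity elsewhere commutes with
every element of `Γ`. -/
theorem swap_of_equivalent_orbits_centralizes {Ω : Type*} [Fintype Ω]
    (Γ : Subgroup (Equiv.Perm Ω)) (Δ₁ Δ₂ : Set Ω)
    (h₁ : IsOrbit Γ Δ₁) (h₂ : IsOrbit Γ Δ₂) (hne : Δ₁ ≠ Δ₂)
    (b' : Ω → Ω) (hbij : Set.BijOn b' Δ₁ Δ₂)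
    (hequiv : ∀ φ ∈ Γ, ∀ δ ∈ Δ₁, φ (b' δ) = b' (φ δ))
    (b : Equiv.Perm Ω)
    (hb₁ : ∀ x ∈ Δ₁, b x = b' x)
    (hb₂ : ∀ x ∈ Δ₂, b x ∈ Δ₁ ∧ b' (b x) = x)
    (hbfix : ∀ x, x ∉ Δ₁ → x ∉ Δ₂ → b x = x) :
    ∀ φ ∈ Γ, b * φ = φ * b := by
  obtain ⟨ω₁, rfl⟩ := h₁
  obtain ⟨ω₂, rfl⟩ := h₂
  intro φ hφ
  have hinv : ∀ (ω x : Ω), x ∈ MulAction.orbit Γ ω → φ x ∈ MulAction.orbit Γ ω := by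
    rintro ω x ⟨g, rfl⟩
    exact ⟨⟨φ, hφ⟩ * g, by simp [mul_smul]⟩
  have hinv' : ∀ (ω x : Ω), φ x ∈ MulAction.orbit Γ ω → x ∈ MulAction.orbit Γ ω := by
    intro ω x hx
    obtain ⟨g, hg⟩ := hx
    refine ⟨⟨φ, hφ⟩⁻¹ * g, ?_⟩
    have : ((⟨φ, hφ⟩ : Γ)⁻¹ : Γ) • (φ x) = x := by
      show φ⁻¹ (φ x) = x
      simp
    show (⟨φ, hφ⟩⁻¹ * g : Γ) • ω = x
    rw [mul_smul, show g • ω = φ x from hg, this]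
  ext x
  simp only [Equiv.Perm.coe_mul, Function.comp_apply]
  by_cases hx1 : x ∈ MulAction.orbit Γ ω₁
  · rw [hb₁ (φ x) (hinv _ _ hx1), hb₁ x hx1, hequiv φ hφ x hx1]
  · by_cases hx2 : x ∈ MulAction.orbit Γ ω₂
    · obtain ⟨hbx1, hbx'⟩ := hb₂ x hx2
      obtain ⟨hbφx1, hbφx'⟩ := hb₂ (φ x) (hinv _ _ hx2)
      have hmem : φ (b x) ∈ MulAction.orbit Γ ω₁ := hinv _ _ hbx1
      have : b' (φ (b x)) = φ x := by rw [← hequiv φ hφ _ hbx1, hbx']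
      exact hbij.injOn hbφx1 hmem (hbφx'.trans this.symm)
    · have hφ1 : φ x ∉ MulAction.orbit Γ ω₁ := fun h => hx1 (hinv' _ _ h)
      have hφ2 : φ x ∉ MulAction.orbit Γ ω₂ := fun h => hx2 (hinv' _ _ h)
      rw [hbfix x hx1 hx2, hbfix (φ x) hφ1 hφ2]
end

section
/- Let G be a colored graph with automorphism group Γ = Aut(G), and let Δ₁, Δ₂ be two orbits of Γ lying in different factors of some disjoint direct decomposition Γ = Γ₁ × Γ₂ (supports of Γ₁ and Γ₂ disjoint, Δ₁ ⊆ supp(Γ₁), Δ₂ ⊆ supp(Γ₂)). Then Δ₁ and Δ₂ are homogeneously connected in G: either every vertex of Δ₁ is adjacent to every vertex of Δ₂, or no vertex of Δ₁ is adjacent to any vertex of Δ₂. -/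
/-- The support of a permutation group: the points moved by some element. -/
def grpSupp {Ω : Type*} (Γ : Subgroup (Equiv.Perm Ω)) : Set Ω :=
  {ω | ∃ φ ∈ Γ, φ ω ≠ ω}

lemma fix_of_not_mem_supp {Ω : Type*} {Γ : Subgroup (Equiv.Perm Ω)}
    {φ : Equiv.Perm Ω} (hφ : φ ∈ Γ) {x : Ω} (hx : x ∉ grpSupp Γ) : φ x = x := by
  by_contra h
  exact hx ⟨φ, hφ, h⟩

/-- Orbits lying in different factors of a disjoint direct decomposition of the
automorphism group of a colored graph are homogeneously connected. -/
theorem orbits_in_different_factors_homogeneously_connected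
    {V C : Type*} [Fintype V] (G : SimpleGraph V) (col : V → C)
    (Γ Γ₁ Γ₂ : Subgroup (Equiv.Perm V))
    (hAut : ∀ φ : Equiv.Perm V, φ ∈ Γ ↔
      ((∀ v w, G.Adj (φ v) (φ w) ↔ G.Adj v w) ∧ ∀ v, col (φ v) = col v))
    (hle₁ : Γ₁ ≤ Γ) (hle₂ : Γ₂ ≤ Γ)
    (hdisj : Disjoint (grpSupp Γ₁) (grpSupp Γ₂))
    (hprod : ∀ g ∈ Γ, ∃ g₁ ∈ Γ₁, ∃ g₂ ∈ Γ₂, g = g₁ * g₂)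
    (Δ₁ Δ₂ : Set V) (h₁ : IsOrbit Γ Δ₁) (h₂ : IsOrbit Γ Δ₂)
    (hΔ₁ : Δ₁ ⊆ grpSupp Γ₁) (hΔ₂ : Δ₂ ⊆ grpSupp Γ₂) :
    (∀ v ∈ Δ₁, ∀ w ∈ Δ₂, G.Adj v w) ∨ (∀ v ∈ Δ₁, ∀ w ∈ Δ₂, ¬ G.Adj v w) := by
  obtain ⟨ω₁, rfl⟩ := h₁
  obtain ⟨ω₂, rfl⟩ := h₂
  have hω₁ : ω₁ ∈ MulAction.orbit Γ ω₁ := MulAction.mem_orbit_self ω₁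
  -- points of Δ₁ are not in supp Γ₂, points of Δ₂ not in supp Γ₁
  have hn₂ : ∀ x ∈ MulAction.orbit Γ ω₁, x ∉ grpSupp Γ₂ := fun x hx hmem =>
    (hdisj.ne_of_mem (hΔ₁ hx) hmem) rfl
  have hn₁ : ∀ x ∈ MulAction.orbit Γ ω₂, x ∉ grpSupp Γ₁ := fun x hx hmem =>
    (hdisj.symm.ne_of_mem (hΔ₂ hx) hmem) rfl
  have key : ∀ v ∈ MulAction.orbit Γ ω₁, ∀ w ∈ MulAction.orbit Γ ω₂,
      (G.Adj v w ↔ G.Adj ω₁ ω₂) := by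
    rintro v ⟨⟨g, hg⟩, rfl⟩ w ⟨⟨h, hh⟩, rfl⟩
    obtain ⟨g₁, hg₁, g₂, hg₂, rfl⟩ := hprod g hg
    obtain ⟨h₁', hh₁, h₂, hh₂, rfl⟩ := hprod h hh
    have e1 : g₂ ω₁ = ω₁ := fix_of_not_mem_supp hg₂ (hn₂ _ hω₁)
    have hw2 : h₂ ω₂ ∈ MulAction.orbit Γ ω₂ := ⟨⟨h₂, hle₂ hh₂⟩, rfl⟩
    have e2 : h₁' (h₂ ω₂) = h₂ ω₂ := fix_of_not_mem_supp hh₁ (hn₁ _ hw2)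
    have e3 : g₁ (h₂ ω₂) = h₂ ω₂ := fix_of_not_mem_supp hg₁ (hn₁ _ hw2)
    have e4 : h₂ ω₁ = ω₁ := fix_of_not_mem_supp hh₂ (hn₂ _ hω₁)
    have hφ : (g₁ * h₂ : Equiv.Perm V) ∈ Γ := mul_mem (hle₁ hg₁) (hle₂ hh₂)
    have := ((hAut _).mp hφ).1 ω₁ ω₂
    simp only [Equiv.Perm.mul_apply, e4] at this
    have hv : (g₁ * g₂ : Equiv.Perm V) ω₁ = g₁ ω₁ := by
      simp [Equiv.Perm.mul_apply, e1]
    have hw : (h₁' * h₂ : Equiv.Perm V) ω₂ = h₂ ω₂ := by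
      simp [Equiv.Perm.mul_apply, e2]
    have hv' : (⟨g₁ * g₂, hg⟩ : Γ) • ω₁ = g₁ ω₁ := hv
    have hw' : (⟨h₁' * h₂, hh⟩ : Γ) • ω₂ = h₂ ω₂ := hw
    show G.Adj ((⟨g₁ * g₂, hg⟩ : Γ) • ω₁) ((⟨h₁' * h₂, hh⟩ : Γ) • ω₂) ↔ G.Adj ω₁ ω₂
    rw [hv', hw', ← e3]
    exact this
  by_cases hA : G.Adj ω₁ ω₂
  · exact Or.inl fun v hv w hw => (key v hv w hw).mpr hA
  · exact Or.inr fun v hv w hw hadj => hA ((key v hv w hw).mp hadj)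
end
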